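/- There exist positive constants c₁(n) and c₂(n), depending only on n, such that for every rectangle R ⊂ ℝⁿ with side lengths ℓ₁,…,ℓₙ > 0, the count N(R) = #{m ∈ ℕ₀ⁿ : Σᵢ mᵢ²/ℓᵢ² ≤ Σᵢ 1/ℓᵢ²} satisfies c₁·|∂R|ⁿ/|R|^{n−1} ≤ N(R) ≤ c₂·|∂R|ⁿ/|R|^{n−1}. -/

import Mathlib

open Finset

/-- There exist constants c₁(n), c₂(n) > 0 such that for every rectangle R ⊂ ℝⁿ,
c₁·|∂R|ⁿ/|R|^{n−1} ≤ N(R) ≤ c₂·|∂R|ⁿ/|R|^{n−1}, where N(R) counts nonnegative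
lattice points m with Σ mᵢ²/ℓᵢ² ≤ Σ 1/ℓᵢ². -/
theorem rectangle_isoperimetric_bounds (n : ℕ) (hn : 0 < n) :
    ∃ c₁ c₂ : ℝ, 0 < c₁ ∧ 0 < c₂ ∧
      ∀ ℓ : Fin n → ℝ, (∀ i, 0 < ℓ i) →
        ∀ N : ℕ, N = Set.ncard {m : Fin n → ℕ |
            ∑ i, (m i : ℝ) ^ 2 / ℓ i ^ 2 ≤ ∑ i, 1 / ℓ i ^ 2} →
          c₁ * (2 * ∑ i, ∏ j ∈ Finset.univ.erase i, ℓ j) ^ n / (∏ i, ℓ i) ^ (n - 1)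
              ≤ (N : ℝ) ∧
          (N : ℝ) ≤
            c₂ * (2 * ∑ i, ∏ j ∈ Finset.univ.erase i, ℓ j) ^ n / (∏ i, ℓ i) ^ (n - 1) := by
  have hn0 : (n : ℝ) ≠ 0 := Nat.cast_ne_zero.mpr hn.ne'
  have hnpos : (0 : ℝ) < n := by exact_mod_cast hn
  refine ⟨(1 / (2 * n)) ^ n, 1, by positivity, one_pos, fun ℓ hℓ N hN => ?_⟩
  set S : Set (Fin n → ℕ) := {m : Fin n → ℕ |
      ∑ i, (m i : ℝ) ^ 2 / ℓ i ^ 2 ≤ ∑ i, 1 / ℓ i ^ 2} with hS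
  set T₁ : ℝ := ∑ i, 1 / ℓ i with hT₁def
  set T₂ : ℝ := ∑ i, 1 / ℓ i ^ 2 with hT₂def
  have hT₂pos : 0 < T₂ := by
    apply Finset.sum_pos (fun i _ => by have := hℓ i; positivity)
    exact univ_nonempty_iff.mpr (Fin.pos_iff_nonempty.mp hn)
  have hT₁pos : 0 < T₁ := by
    apply Finset.sum_pos (fun i _ => by have := hℓ i; positivity)
    exact univ_nonempty_iff.mpr (Fin.pos_iff_nonempty.mp hn)
  set Q : ℝ := Real.sqrt T₂ with hQdef
  have hQsq : Q ^ 2 = T₂ := Real.sq_sqrt hT₂pos.le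
  have hQpos : 0 < Q := Real.sqrt_pos.mpr hT₂pos
  have hP : (0:ℝ) < ∏ i, ℓ i := Finset.prod_pos fun i _ => hℓ i
  -- Q ≤ T₁
  have hQle : Q ≤ T₁ := by
    have h1 : T₂ ≤ T₁ ^ 2 := by
      have hstep : ∀ i ∈ (univ : Finset (Fin n)), 1 / ℓ i ^ 2 ≤ 1 / ℓ i * T₁ := by
        intro i _
        have hi := hℓ i
        have h2 : 1 / ℓ i ≤ T₁ := by
          rw [hT₁def]
          exact Finset.single_le_sum (f := fun j => 1 / ℓ j)
            (fun j _ => by have := hℓ j; positivity) (mem_univ i)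
        calc 1 / ℓ i ^ 2 = 1 / ℓ i * (1 / ℓ i) := by field_simp
          _ ≤ 1 / ℓ i * T₁ := mul_le_mul_of_nonneg_left h2 (by positivity)
      calc T₂ ≤ ∑ i, 1 / ℓ i * T₁ := Finset.sum_le_sum hstep
        _ = T₁ ^ 2 := by rw [← Finset.sum_mul, ← hT₁def, sq]
    have := Real.sqrt_le_sqrt h1
    rwa [← hQdef, Real.sqrt_sq hT₁pos.le] at this
  -- T₁ ≤ √n * Q
  have hT₁le : T₁ ≤ Real.sqrt n * Q := by
    have h1 : T₁ ^ 2 ≤ n * T₂ := by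
      have hcs := sq_sum_le_card_mul_sum_sq (s := (univ : Finset (Fin n)))
        (f := fun i => 1 / ℓ i)
      simp only [Finset.card_univ, Fintype.card_fin] at hcs
      calc T₁ ^ 2 ≤ (n : ℝ) * ∑ i, (1 / ℓ i) ^ 2 := hcs
        _ = n * T₂ := by
            rw [hT₂def]; congr 1
            exact Finset.sum_congr rfl fun i _ => by rw [div_pow, one_pow]
    have h2 : T₁ ^ 2 ≤ (Real.sqrt n * Q) ^ 2 := by
      rw [mul_pow, Real.sq_sqrt hnpos.le, hQsq]; exact h1
    have := Real.sqrt_le_sqrt h2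
    rwa [Real.sqrt_sq hT₁pos.le, Real.sqrt_sq (by positivity)] at this
  -- 1 ≤ Q * ℓ i
  have hB1 : ∀ i, 1 ≤ Q * ℓ i := by
    intro i
    have hi := hℓ i
    have h1 : (1 / ℓ i) ^ 2 ≤ Q ^ 2 := by
      rw [hQsq, div_pow, one_pow, hT₂def]
      exact Finset.single_le_sum (f := fun j => 1 / ℓ j ^ 2)
        (fun j _ => by have := hℓ j; positivity) (mem_univ i)
    have h2 : 1 / ℓ i ≤ Q := by
      have := Real.sqrt_le_sqrt h1
      rwa [Real.sqrt_sq (by positivity), Real.sqrt_sq hQpos.le] at this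
    rw [div_le_iff₀ hi] at h2
    linarith
  -- upper box
  set Fup : Finset (Fin n → ℕ) :=
    Fintype.piFinset (fun i => Finset.range (⌊Q * ℓ i⌋₊ + 1)) with hFup
  have hsub_up : S ⊆ ↑Fup := by
    intro m hm
    have hm' : ∑ i, (m i : ℝ) ^ 2 / ℓ i ^ 2 ≤ T₂ := hm
    simp only [hFup, Finset.mem_coe, Fintype.mem_piFinset, Finset.mem_range,
      Nat.lt_succ_iff]
    intro i
    have hi := hℓ i
    apply Nat.le_floor
    have h1 : (m i : ℝ) ^ 2 / ℓ i ^ 2 ≤ T₂ := by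
      refine le_trans ?_ hm'
      exact Finset.single_le_sum (f := fun j => (m j : ℝ) ^ 2 / ℓ j ^ 2)
        (fun j _ => by have := hℓ j; positivity) (mem_univ i)
    have h2 : (m i : ℝ) ^ 2 ≤ (Q * ℓ i) ^ 2 := by
      rw [mul_pow, hQsq]
      rw [div_le_iff₀ (by positivity)] at h1
      linarith [h1]
    have := Real.sqrt_le_sqrt h2
    rwa [Real.sqrt_sq (by positivity), Real.sqrt_sq (by positivity)] at this
  have hSfin : S.Finite := Set.Finite.subset Fup.finite_toSet hsub_up
  -- lower box
  set b : Fin n → ℝ := fun i => Q * ℓ i / Real.sqrt n with hbdef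
  have hbnn : ∀ i, 0 ≤ b i := fun i => by
    have := hℓ i; have := hQpos
    simp only [hbdef]; positivity
  set Flo : Finset (Fin n → ℕ) :=
    Fintype.piFinset (fun i => Finset.range (⌊b i⌋₊ + 1)) with hFlo
  have hsub_lo : ↑Flo ⊆ S := by
    intro m hm
    simp only [hFlo, Finset.mem_coe, Fintype.mem_piFinset, Finset.mem_range,
      Nat.lt_succ_iff] at hm
    show ∑ i, (m i : ℝ) ^ 2 / ℓ i ^ 2 ≤ T₂
    have key : ∀ i, (m i : ℝ) ^ 2 / ℓ i ^ 2 ≤ Q ^ 2 / n := by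
      intro i
      have hi := hℓ i
      have h1 : (m i : ℝ) ≤ b i :=
        le_trans (Nat.cast_le.mpr (hm i)) (Nat.floor_le (hbnn i))
      have h2 : (m i : ℝ) ^ 2 ≤ b i ^ 2 := pow_le_pow_left₀ (by positivity) h1 2
      have h3 : b i ^ 2 = Q ^ 2 * ℓ i ^ 2 / n := by
        simp only [hbdef]
        rw [div_pow, mul_pow, Real.sq_sqrt hnpos.le]
      rw [h3] at h2
      rw [div_le_div_iff₀ (by positivity) hnpos]
      exact (le_div_iff₀ hnpos).mp h2
    calc ∑ i, (m i : ℝ) ^ 2 / ℓ i ^ 2 ≤ ∑ _i : Fin n, Q ^ 2 / n :=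
          Finset.sum_le_sum fun i _ => key i
      _ = n * (Q ^ 2 / n) := by rw [Finset.sum_const, Finset.card_univ,
          Fintype.card_fin, nsmul_eq_mul]
      _ = T₂ := by field_simp [hQsq]; exact hQsq
  -- cardinality bounds
  have hNup : (N : ℝ) ≤ ∏ i, (2 * (ℓ i * T₁)) := by
    have h1 : N ≤ Fup.card := by
      rw [hN, ← Set.ncard_coe_finset Fup]
      exact Set.ncard_le_ncard hsub_up Fup.finite_toSet
    have h2 : (Fup.card : ℝ) = ∏ i, ((⌊Q * ℓ i⌋₊ : ℝ) + 1) := by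
      rw [hFup, Fintype.card_piFinset]
      push_cast
      simp [Finset.card_range]
    calc (N : ℝ) ≤ (Fup.card : ℝ) := by exact_mod_cast h1
      _ = ∏ i, ((⌊Q * ℓ i⌋₊ : ℝ) + 1) := h2
      _ ≤ ∏ i, (2 * (ℓ i * T₁)) := by
          apply Finset.prod_le_prod (fun i _ => by positivity)
          intro i _
          have hi := hℓ i
          have h3 : (⌊Q * ℓ i⌋₊ : ℝ) ≤ Q * ℓ i := Nat.floor_le (by positivity)
          have hq' : Q * ℓ i ≤ ℓ i * T₁ := by
            rw [mul_comm (ℓ i)]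
            exact mul_le_mul_of_nonneg_right hQle hi.le
          linarith [hB1 i]
  have hNlo : ∏ i, (ℓ i * T₁ / n) ≤ (N : ℝ) := by
    have h1 : Flo.card ≤ N := by
      rw [hN, ← Set.ncard_coe_finset Flo]
      exact Set.ncard_le_ncard hsub_lo hSfin
    have h2 : (Flo.card : ℝ) = ∏ i, ((⌊b i⌋₊ : ℝ) + 1) := by
      rw [hFlo, Fintype.card_piFinset]
      push_cast
      simp [Finset.card_range]
    calc ∏ i, (ℓ i * T₁ / n) ≤ ∏ i, ((⌊b i⌋₊ : ℝ) + 1) := by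
          apply Finset.prod_le_prod
          · intro i _; have := hℓ i; positivity
          · intro i _
            have hi := hℓ i
            have h3 : b i ≤ (⌊b i⌋₊ : ℝ) + 1 := (Nat.lt_floor_add_one _).le
            have h4 : ℓ i * T₁ / n ≤ b i := by
              simp only [hbdef]
              rw [div_le_div_iff₀ hnpos (Real.sqrt_pos.mpr hnpos)]
              have h5 : ℓ i * T₁ ≤ ℓ i * (Real.sqrt n * Q) :=
                mul_le_mul_of_nonneg_left hT₁le hi.le
              calc ℓ i * T₁ * Real.sqrt ↑n ≤ ℓ i * (Real.sqrt n * Q) * Real.sqrt n :=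
                    mul_le_mul_of_nonneg_right h5 (Real.sqrt_nonneg _)
                _ = Q * ℓ i * (Real.sqrt n * Real.sqrt n) := by ring
                _ = Q * ℓ i * n := by rw [Real.mul_self_sqrt hnpos.le]
            linarith
      _ = (Flo.card : ℝ) := h2.symm
      _ ≤ (N : ℝ) := by exact_mod_cast h1
  -- algebra: rewrite the RHS expression
  have hsum : ∑ i, ∏ j ∈ Finset.univ.erase i, ℓ j = (∏ i, ℓ i) * T₁ := by
    rw [hT₁def, Finset.mul_sum]
    apply Finset.sum_congr rfl
    intro i _
    have h := Finset.mul_prod_erase univ ℓ (mem_univ i)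
    rw [mul_one_div, eq_div_iff (hℓ i).ne',
      mul_comm (∏ j ∈ univ.erase i, ℓ j) (ℓ i)]
    exact h
  have hpow : (∏ i, ℓ i) ^ n = (∏ i, ℓ i) ^ (n - 1) * ∏ i, ℓ i := by
    have h := pow_succ (∏ i, ℓ i) (n - 1)
    rwa [Nat.sub_add_cancel hn] at h
  have halg : (2 * ∑ i, ∏ j ∈ Finset.univ.erase i, ℓ j) ^ n / (∏ i, ℓ i) ^ (n - 1)
      = 2 ^ n * T₁ ^ n * ∏ i, ℓ i := by
    rw [hsum, mul_pow, mul_pow, hpow]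
    have hPne : (∏ i, ℓ i) ^ (n - 1) ≠ 0 := by positivity
    field_simp
  rw [mul_div_assoc, mul_div_assoc, halg]
  constructor
  · calc (1 / (2 * (n:ℝ))) ^ n * (2 ^ n * T₁ ^ n * ∏ i, ℓ i)
        = ∏ i, (ℓ i * T₁ / (n:ℝ)) := by
          rw [Finset.prod_div_distrib, Finset.prod_mul_distrib, Finset.prod_const,
            Finset.prod_const, Finset.card_univ, Fintype.card_fin]
          field_simp
          rw [← mul_pow, ← mul_pow, show (1 / (2 * (n:ℝ)) * 2 * n) = 1 by field_simp, one_pow]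
      _ ≤ (N : ℝ) := hNlo
  · calc (N : ℝ) ≤ ∏ i, (2 * (ℓ i * T₁)) := hNup
      _ = 1 * (2 ^ n * T₁ ^ n * ∏ i, ℓ i) := by
          rw [Finset.prod_mul_distrib, Finset.prod_mul_distrib, Finset.prod_const,
            Finset.prod_const, Finset.card_univ, Fintype.card_fin]
          ring
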